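/- Fix a total observation window T > 0, duty cycle u ∈ (0,1) and departure rate λ_f > 0. For N ≥ 2 samples under uniform sampling with inter-sample time T_u = T/(N−1) and Γ_u = e^{−λ_f T_u/u}, let V_{ũ_{ua},N} = u(1−u)/N + (2u(1−u)/N²)·Γ_u·(Γ_u^N − N(Γ_u−1) − 1)/(1−Γ_u)². Then lim_{N→∞} V_{ũ_{ua},N} = (2u(1−u)/η²)·(e^{−η} + η − 1), where η = T·λ_f/u. -/

import Mathlib

open Filter Real

lemma exp_slope_lim' : Tendsto (fun x : ℝ => (Real.exp x - 1) / x)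
    (nhdsWithin 0 {0}ᶜ) (nhds 1) := by
  have h := Real.hasDerivAt_exp 0
  rw [hasDerivAt_iff_tendsto_slope] at h
  simpa [slope_fun_def, Real.exp_zero, div_eq_inv_mul] using h

/-- for uniform sampling over a fixed window `T`, the mean squared
error of the averaging estimator tends, as the number of samples `N → ∞`, to
`(2u(1-u)/η²)(e^{-η} + η - 1)` where `η = Tλ_f/u`. -/
theorem avg_estimator_uniform_mse_limit (u lf T : ℝ)
    (hu : 0 < u) (hu1 : u < 1) (hlf : 0 < lf) (hT : 0 < T) :
    Filter.Tendsto
      (fun N : ℕ =>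
        u * (1 - u) / (N : ℝ)
          + 2 * u * (1 - u) / (N : ℝ) ^ 2 *
              Real.exp (-(lf * (T / ((N : ℝ) - 1))) / u) *
              ((Real.exp (-(lf * (T / ((N : ℝ) - 1))) / u)) ^ N
                - (N : ℝ) * (Real.exp (-(lf * (T / ((N : ℝ) - 1))) / u) - 1) - 1)
            / (1 - Real.exp (-(lf * (T / ((N : ℝ) - 1))) / u)) ^ 2)
      Filter.atTop
      (nhds (2 * u * (1 - u) / (T * lf / u) ^ 2 *
        (Real.exp (-(T * lf / u)) + T * lf / u - 1))) := by
  set η : ℝ := T * lf / u with hηdef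
  have hη : 0 < η := div_pos (mul_pos hT hlf) hu
  -- the exponent equals `-(η / (N-1))`
  have hexp : ∀ N : ℕ, -(lf * (T / ((N : ℝ) - 1))) / u = -(η / ((N : ℝ) - 1)) := by
    intro N
    rcases eq_or_ne ((N : ℝ) - 1) 0 with h | h
    · simp [h]
    · rw [hηdef, neg_div]
      congr 1
      rw [mul_div_assoc', mul_comm lf T, div_div, mul_comm ((N : ℝ) - 1) u, ← div_div]
  set x : ℕ → ℝ := fun N => η / ((N : ℝ) - 1) with hxdef
  set Γ : ℕ → ℝ := fun N => Real.exp (-(x N)) with hΓdef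
  have hden : Tendsto (fun N : ℕ => (N : ℝ) - 1) atTop atTop :=
    tendsto_atTop_add_const_right _ _ tendsto_natCast_atTop_atTop
  have hx0 : Tendsto x atTop (nhds 0) := tendsto_const_nhds.div_atTop hden
  -- N / (N-1) → 1
  have hratio : Tendsto (fun N : ℕ => (N : ℝ) / ((N : ℝ) - 1)) atTop (nhds 1) := by
    have h1 : Tendsto (fun N : ℕ => 1 + 1 / ((N : ℝ) - 1)) atTop (nhds (1 + 0)) :=
      tendsto_const_nhds.add (tendsto_const_nhds.div_atTop hden)
    rw [add_zero] at h1
    refine h1.congr' ?_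
    filter_upwards [eventually_ge_atTop 2] with N hN
    have hN1 : ((N : ℝ) - 1) ≠ 0 := by
      have : (2 : ℝ) ≤ (N : ℝ) := by exact_mod_cast hN
      nlinarith
    field_simp
    ring
  have hΓ1 : Tendsto Γ atTop (nhds 1) := by
    have hneg : Tendsto (fun N : ℕ => -(x N)) atTop (nhds 0) := by simpa using hx0.neg
    have := (Real.continuous_exp.tendsto 0).comp hneg
    rw [Real.exp_zero] at this
    refine this.congr (fun N => ?_)
    simp [hΓdef]
  -- Γ N ^ N → exp (-η)
  have hΓN : Tendsto (fun N : ℕ => Γ N ^ N) atTop (nhds (Real.exp (-η))) := by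
    have h1 : Tendsto (fun N : ℕ => Real.exp (-(η * ((N : ℝ) / ((N : ℝ) - 1)))))
        atTop (nhds (Real.exp (-η))) := by
      have hneg : Tendsto (fun N : ℕ => -(η * ((N : ℝ) / ((N : ℝ) - 1)))) atTop
          (nhds (-η)) := by simpa using (hratio.const_mul η).neg
      exact (Real.continuous_exp.tendsto (-η)).comp hneg
    refine h1.congr fun N => ?_
    simp only [hΓdef, hxdef]
    rw [← Real.exp_nat_mul]
    congr 1
    ring
  -- slope limit : (1 - Γ N)/(x N) → 1
  have hslope : Tendsto (fun N : ℕ => (1 - Γ N) / x N) atTop (nhds 1) := by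
    have hmem : ∀ᶠ N : ℕ in atTop, -(x N) ∈ ({0}ᶜ : Set ℝ) := by
      filter_upwards [eventually_ge_atTop 2] with N hN
      have h2 : (2 : ℝ) ≤ (N : ℝ) := by exact_mod_cast hN
      have hxpos : 0 < x N := div_pos hη (by nlinarith)
      simp [ne_of_lt (neg_neg_iff_pos.mpr hxpos)]
    have htend : Tendsto (fun N : ℕ => -(x N)) atTop (nhdsWithin 0 {0}ᶜ) := by
      rw [tendsto_nhdsWithin_iff]
      exact ⟨by simpa using hx0.neg, hmem⟩
    have := exp_slope_lim'.comp htend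
    refine this.congr fun N => ?_
    simp only [Function.comp, hΓdef]
    ring
  -- g N = N * (1 - Γ N) → η
  have hg : Tendsto (fun N : ℕ => (N : ℝ) * (1 - Γ N)) atTop (nhds η) := by
    have h1 : Tendsto (fun N : ℕ => (η * ((N : ℝ) / ((N : ℝ) - 1))) * ((1 - Γ N) / x N))
        atTop (nhds ((η * 1) * 1)) := (hratio.const_mul η).mul hslope
    rw [mul_one, mul_one] at h1
    refine h1.congr' ?_
    filter_upwards [eventually_ge_atTop 2] with N hN
    have h2 : (2 : ℝ) ≤ (N : ℝ) := by exact_mod_cast hN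
    have hxne : x N ≠ 0 := ne_of_gt (div_pos hη (by nlinarith))
    have hd : ((N : ℝ) - 1) ≠ 0 := by nlinarith
    simp only [hxdef]
    field_simp
  -- the nice form of the sequence
  have hmain : Tendsto (fun N : ℕ =>
      u * (1 - u) / (N : ℝ) +
        2 * u * (1 - u) * Γ N * (Γ N ^ N + (N : ℝ) * (1 - Γ N) - 1)
          / ((N : ℝ) * (1 - Γ N)) ^ 2)
      atTop (nhds (2 * u * (1 - u) / η ^ 2 * (Real.exp (-η) + η - 1))) := by
    have h0 : Tendsto (fun N : ℕ => u * (1 - u) / (N : ℝ)) atTop (nhds 0) :=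
      tendsto_const_nhds.div_atTop tendsto_natCast_atTop_atTop
    have hnum : Tendsto (fun N : ℕ =>
        2 * u * (1 - u) * Γ N * (Γ N ^ N + (N : ℝ) * (1 - Γ N) - 1)) atTop
        (nhds (2 * u * (1 - u) * 1 * (Real.exp (-η) + η - 1))) :=
      ((hΓ1.const_mul _).mul ((hΓN.add hg).sub tendsto_const_nhds))
    have hdenom : Tendsto (fun N : ℕ => ((N : ℝ) * (1 - Γ N)) ^ 2) atTop
        (nhds (η ^ 2)) := hg.pow 2
    have hfrac := hnum.div hdenom (by positivity)
    have := h0.add hfrac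
    rw [zero_add] at this
    convert this using 2
    · simp only [Pi.div_apply]
    · ring
  refine hmain.congr' ?_
  filter_upwards [eventually_ge_atTop 2] with N hN
  have h2 : (2 : ℝ) ≤ (N : ℝ) := by exact_mod_cast hN
  have hNne : (N : ℝ) ≠ 0 := by nlinarith
  have hxpos : 0 < x N := div_pos hη (by nlinarith)
  have hΓlt : Γ N < 1 := by
    simpa [hΓdef] using Real.exp_lt_one_iff.mpr (neg_neg_iff_pos.mpr hxpos)
  have h1Γ : (1 : ℝ) - Γ N ≠ 0 := by nlinarith
  have heq : Real.exp (-(lf * (T / ((N : ℝ) - 1))) / u) = Γ N := by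
    rw [hexp N]
  rw [heq]
  field_simp
  ring
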